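/- For every n ≥ 2, the number of revised ascent sequences of length n avoiding the pattern 221 equals n − 1. Moreover, the 221-avoiding revised ascent sequences of length n are exactly the sequences m,1,2,...,m−1,m,m,...,m (i.e., m followed by 1,2,...,m−1 followed by n−m copies of m) for 1 ≤ m ≤ n−1. -/

import Mathlib

/-- An endofunction of size `n`: values in `{1,…,n}` (indices are `Fin n`, 0-based). -/
def IsEndo (n : ℕ) (x : Fin n → ℕ) : Prop := ∀ i, 1 ≤ x i ∧ x i ≤ n

/-- The maximum value of `x`. -/
def maxVal (n : ℕ) (x : Fin n → ℕ) : ℕ := Finset.univ.sup x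

/-- A Cayley permutation: an endofunction whose image is `{1,…,max x}`. -/
def IsCayley (n : ℕ) (x : Fin n → ℕ) : Prop :=
  IsEndo n x ∧ ∀ v, 1 ≤ v → v ≤ maxVal n x → ∃ i, x i = v

/-- Ascent bottoms (0-based; index 0 always included). -/
def Ascbot (n : ℕ) (x : Fin n → ℕ) : Set (Fin n) :=
  {i | i.1 = 0 ∨ ∃ h : i.1 + 1 < n, x i < x ⟨i.1 + 1, h⟩}

/-- Indices of leftmost occurrences of values. -/
def Nub (n : ℕ) (x : Fin n → ℕ) : Set (Fin n) :=
  {i | ∀ j, j < i → x j ≠ x i}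

/-- A revised ascent sequence. -/
def IsRAS (n : ℕ) (x : Fin n → ℕ) : Prop :=
  IsCayley n x ∧ Ascbot n x = Nub n x

/-- `x` avoids the pattern `221`. -/
def Avoids221 (n : ℕ) (x : Fin n → ℕ) : Prop :=
  ¬ ∃ i j k : Fin n, i < j ∧ j < k ∧ x i = x j ∧ x k < x j

def fSeq (n m : ℕ) : Fin n → ℕ := fun i => if i.1 = 0 then m else if i.1 < m then i.1 else m

lemma fSeq_val (n m : ℕ) (j : Fin n) :
    (1 ≤ j.1 ∧ j.1 < m ∧ fSeq n m j = j.1) ∨ ((j.1 = 0 ∨ m ≤ j.1) ∧ fSeq n m j = m) := by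
  simp only [fSeq]; split_ifs <;> omega

lemma back (n m : ℕ) (hn : 2 ≤ n) (hm1 : 1 ≤ m) (hm : m ≤ n - 1) :
    IsRAS n (fSeq n m) ∧ Avoids221 n (fSeq n m) := by
  have hmn : m < n := by omega
  have val := fSeq_val n m
  have hle : ∀ i : Fin n, fSeq n m i ≤ m ∧ 1 ≤ fSeq n m i := by
    intro i; rcases val i with ⟨h1, h2, h3⟩ | ⟨h1, h3⟩ <;> omega
  have hmax : maxVal n (fSeq n m) = m := by
    apply le_antisymm
    · exact Finset.sup_le fun i _ => (hle i).1
    · have := Finset.le_sup (f := fSeq n m) (Finset.mem_univ (⟨0, by omega⟩ : Fin n))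
      show m ≤ Finset.univ.sup (fSeq n m)
      simpa [fSeq] using this
  refine ⟨⟨⟨fun i => ⟨(hle i).2, le_trans (hle i).1 (by omega)⟩, ?_⟩, ?_⟩, ?_⟩
  · -- surjectivity onto [1, max]
    intro v hv1 hv2
    rw [hmax] at hv2
    rcases eq_or_lt_of_le hv2 with h | h
    · exact ⟨⟨0, by omega⟩, by simp [fSeq, h]⟩
    · refine ⟨⟨v, by omega⟩, ?_⟩
      simp only [fSeq]; split_ifs <;> omega
  · -- Ascbot = Nub
    ext i
    simp only [Ascbot, Nub, Set.mem_setOf_eq]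
    constructor
    · rintro (h0 | ⟨h, hlt⟩)
      · intro j hj; have : j.1 < i.1 := hj; omega
      · intro j hj
        have hji : j.1 < i.1 := hj
        rcases val i with ⟨hi1, hi2, hi3⟩ | ⟨hi1, hi3⟩
        · rcases val j with ⟨hj1, hj2, hj3⟩ | ⟨hj1, hj3⟩ <;> rw [hi3, hj3] <;> omega
        · exfalso
          rcases val ⟨i.1 + 1, h⟩ with ⟨hk1, hk2, hk3⟩ | ⟨hk1, hk3⟩
          · rw [hi3, hk3] at hlt; omega
          · rw [hi3, hk3] at hlt; omega
    · intro hnub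
      by_cases h0 : i.1 = 0
      · exact Or.inl h0
      right
      rcases val i with ⟨hi1, hi2, hi3⟩ | ⟨hi1, hi3⟩
      · have h : i.1 + 1 < n := by omega
        refine ⟨h, ?_⟩
        rcases val ⟨i.1 + 1, h⟩ with ⟨hk1, hk2, hk3⟩ | ⟨hk1, hk3⟩
        · rw [hi3, hk3]; simp only [Fin.val_mk]; omega
        · rw [hi3, hk3]; omega
      · exfalso
        have hz : (⟨0, by omega⟩ : Fin n) < i := by
          simp [Fin.lt_def]; omega
        have := hnub ⟨0, by omega⟩ hz
        rw [hi3] at this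
        simp [fSeq] at this
  · -- avoids 221
    rintro ⟨i, j, k, hij, hjk, hxij, hxk⟩
    have hij' : i.1 < j.1 := hij
    have hjk' : j.1 < k.1 := hjk
    rcases val i with ⟨hia, hib, hic⟩ | ⟨hia, hic⟩ <;>
      rcases val j with ⟨hja, hjb, hjc⟩ | ⟨hja, hjc⟩ <;>
        rcases val k with ⟨hka, hkb, hkc⟩ | ⟨hka, hkc⟩ <;>
          rw [hic, hjc] at hxij <;> rw [hkc, hjc] at hxk <;> omega

lemma forward (n : ℕ) (hn : 2 ≤ n) (x : Fin n → ℕ)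
    (hras : IsRAS n x) (hav : Avoids221 n x) :
    ∃ m, 1 ≤ m ∧ m ≤ n - 1 ∧ x = fSeq n m := by
  classical
  obtain ⟨⟨hendo, hsurj⟩, hAN⟩ := hras
  have npos : 0 < n := by omega
  obtain ⟨m, hmdef⟩ : ∃ m, x ⟨0, npos⟩ = m := ⟨_, rfl⟩
  -- a new index (other than 0) is followed by a strict ascent
  have hnew : ∀ (i : ℕ) (h : i < n), 1 ≤ i →
      (∀ j : Fin n, j.1 < i → x j ≠ x ⟨i, h⟩) → ∀ (h2 : i + 1 < n),
      x ⟨i, h⟩ < x ⟨i + 1, h2⟩ := by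
    intro i h h1 hj h2
    have hmem : (⟨i, h⟩ : Fin n) ∈ Nub n x := fun j hj' => hj j hj'
    rw [← hAN] at hmem
    rcases hmem with h0 | ⟨h', hlt⟩
    · simp at h0; omega
    · exact hlt
  -- a repeated value freezes the sequence
  have hrep : ∀ (i : ℕ) (h : i < n) (h2 : i + 1 < n), 1 ≤ i →
      (∃ j : Fin n, j.1 < i ∧ x j = x ⟨i, h⟩) →
      x ⟨i + 1, h2⟩ = x ⟨i, h⟩ := by
    rintro i h h2 h1 ⟨j, hji, hxj⟩
    have hnotnub : (⟨i, h⟩ : Fin n) ∉ Nub n x := by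
      intro hc
      exact hc j (by exact hji) hxj
    rw [← hAN] at hnotnub
    simp only [Ascbot, Set.mem_setOf_eq, not_or] at hnotnub
    have hge : ¬ x ⟨i, h⟩ < x ⟨i + 1, h2⟩ := by
      intro hc; exact hnotnub.2 ⟨h2, hc⟩
    have hle : ¬ x ⟨i + 1, h2⟩ < x ⟨i, h⟩ := by
      intro hc
      exact hav ⟨j, ⟨i, h⟩, ⟨i + 1, h2⟩, by exact hji, by simp [Fin.lt_def], hxj, hc⟩
    omega
  -- the last index is a repeat
  have hlast : ∃ j : Fin n, j.1 < n - 1 ∧ x j = x ⟨n - 1, by omega⟩ := by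
    have hnot : (⟨n - 1, by omega⟩ : Fin n) ∉ Ascbot n x := by
      simp only [Ascbot, Set.mem_setOf_eq, not_or]
      constructor
      · omega
      · rintro ⟨h2, -⟩; omega
    rw [hAN] at hnot
    simp only [Nub, Set.mem_setOf_eq] at hnot
    push_neg at hnot
    obtain ⟨j, hj1, hj2⟩ := hnot
    exact ⟨j, by exact hj1, hj2⟩
  -- t : the first repeated index
  have hPex : ∃ k, 1 ≤ k ∧ ∃ h : k < n, ∃ j : Fin n, j.1 < k ∧ x j = x ⟨k, h⟩ := by
    refine ⟨n - 1, by omega, by omega, hlast⟩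
  obtain ⟨t, ht1, htn, htrep, htmin⟩ :
      ∃ t, ∃ (ht1 : 1 ≤ t) (htn : t < n),
        (∃ j : Fin n, j.1 < t ∧ x j = x ⟨t, htn⟩) ∧
        (∀ (i : ℕ) (h : i < n), 1 ≤ i → i < t →
          ∀ j : Fin n, j.1 < i → x j ≠ x ⟨i, h⟩) := by
    obtain ⟨h1, hn', hrepspec⟩ := Nat.find_spec hPex
    exact ⟨Nat.find hPex, h1, hn', hrepspec,
      fun i h hi1 hit j hji heq => Nat.find_min hPex hit ⟨hi1, h, j, hji, heq⟩⟩
  -- the sequence is constant from t on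
  have hconst : ∀ d (hd : t + d < n),
      x ⟨t + d, hd⟩ = x ⟨t, htn⟩ ∧ ∃ j : Fin n, j.1 < t + d ∧ x j = x ⟨t + d, hd⟩ := by
    intro d
    induction d with
    | zero => intro hd; exact ⟨rfl, htrep⟩
    | succ d ih =>
      intro hd
      have hd' : t + d < n := by omega
      obtain ⟨he, hr⟩ := ih hd'
      have hstep := hrep (t + d) hd' hd (by omega) hr
      refine ⟨hstep.trans he, ⟨⟨t + d, hd'⟩, by simp, hstep.symm⟩⟩
  -- strict increase before t
  have hmono : ∀ d (i : ℕ) (h1 : 1 ≤ i) (h2 : i + d ≤ t) (hi : i < n) (hid : i + d < n),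
      x ⟨i, hi⟩ + d ≤ x ⟨i + d, hid⟩ := by
    intro d
    induction d with
    | zero => intro i h1 h2 hi hid; exact Nat.le_of_eq rfl
    | succ d ih =>
      intro i h1 h2 hi hid
      have hid' : i + d < n := by omega
      have hih := ih i h1 (by omega) hi hid'
      have hstep := hnew (i + d) hid' (by omega)
        (htmin (i + d) hid' (by omega) (by omega)) hid
      have e : x ⟨i + (d + 1), hid⟩ = x ⟨i + d + 1, hid⟩ := rfl
      omega
  have hmono' : ∀ (i j : ℕ) (hi1 : 1 ≤ i) (hij : i ≤ j) (hjt : j ≤ t)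
      (hi : i < n) (hj : j < n), x ⟨i, hi⟩ + (j - i) ≤ x ⟨j, hj⟩ := by
    intro i j hi1 hij hjt hi hj
    have hx : i + (j - i) < n := by omega
    have := hmono (j - i) i hi1 (by omega) hi hx
    have e : x (⟨i + (j - i), hx⟩ : Fin n) = x ⟨j, hj⟩ :=
      congrArg x (Fin.ext (by simp; omega))
    omega
  -- x t = m
  have hxt : x ⟨t, htn⟩ = m := by
    obtain ⟨j, hj1, hj2⟩ := htrep
    by_cases hj0 : j.1 = 0
    · rw [← hj2, ← hmdef]
      exact congrArg x (Fin.ext (by simp [hj0]))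
    · exfalso
      have := hmono' j.1 t (by omega) (by omega) le_rfl j.2 htn
      have ej : (⟨j.1, j.2⟩ : Fin n) = j := rfl
      rw [ej, hj2] at this
      omega
  -- upper bound before t
  have hub : ∀ (i : ℕ) (hi : i < n), 1 ≤ i → i ≤ t → x ⟨i, hi⟩ + (t - i) ≤ m := by
    intro i hi h1 h2
    have := hmono' i t h1 h2 le_rfl hi htn
    omega
  -- lower bound
  have hlb : ∀ (i : ℕ) (hi : i < n), 1 ≤ i → i ≤ t → i ≤ x ⟨i, hi⟩ := by
    intro i hi h1 h2
    have h1n : (1 : ℕ) < n := by omega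
    have := hmono' 1 i le_rfl h1 h2 h1n hi
    have := (hendo ⟨1, h1n⟩).1
    omega
  -- m ≤ maxVal
  have hmmax : m ≤ maxVal n x := by
    rw [maxVal, ← hmdef]
    exact Finset.le_sup (Finset.mem_univ _)
  -- every value in [1, m) occurs at an index in [1, t)
  have hloc : ∀ v, 1 ≤ v → v < m → ∃ (i : ℕ) (hi : i < n),
      1 ≤ i ∧ i < t ∧ x ⟨i, hi⟩ = v := by
    intro v hv1 hv2
    obtain ⟨i, hxi⟩ := hsurj v hv1 (le_trans (le_of_lt hv2) hmmax)
    refine ⟨i.1, i.2, ?_, ?_, ?_⟩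
    · by_contra h0
      have hi0 : i = ⟨0, npos⟩ := Fin.ext (by show i.1 = 0; omega)
      rw [hi0, hmdef] at hxi
      omega
    · by_contra hge
      push_neg at hge
      have hci := (hconst (i.1 - t) (by omega)).1
      have e : x (⟨t + (i.1 - t), by omega⟩ : Fin n) = x i :=
        congrArg x (Fin.ext (by simp; omega))
      rw [e, hxi, hxt] at hci
      omega
    · exact hxi
  -- every v in [1,m) sits at index v, below t
  have hval : ∀ v, 1 ≤ v → v < m → v < t ∧ ∃ hv : v < n, x ⟨v, hv⟩ = v := by
    intro v
    induction v using Nat.strong_induction_on with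
    | _ v ih =>
      intro hv1 hv2
      obtain ⟨i, hi, hi1, hi2, hxiv⟩ := hloc v hv1 hv2
      have hlbi := hlb i hi hi1 (by omega)
      have hiv : i = v := by
        by_contra hne
        have hivlt : i < v := by omega
        obtain ⟨_, hv', hxii⟩ := ih i hivlt hi1 (by omega)
        have : x ⟨i, hv'⟩ = x ⟨i, hi⟩ := rfl
        omega
      subst hiv
      exact ⟨hi2, hi, hxiv⟩
  -- t = m
  have htm : t = m := by
    have hm1 : 1 ≤ m := by
      have := (hendo ⟨0, npos⟩).1
      omega
    have htm1 : t ≤ m := by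
      by_cases ht1' : t = 1
      · omega
      · have h1 := hlb (t - 1) (by omega) (by omega) (by omega)
        have h2 := hub (t - 1) (by omega) (by omega) (by omega)
        omega
    have htm2 : m ≤ t := by
      by_cases hm1' : m = 1
      · omega
      · have := (hval (m - 1) (by omega) (by omega)).1
        omega
    omega
  -- conclude
  have hm1 : 1 ≤ m := by
    have := (hendo ⟨0, npos⟩).1
    omega
  refine ⟨m, hm1, by omega, ?_⟩
  funext i
  simp only [fSeq]
  by_cases h0 : i.1 = 0
  · rw [if_pos h0, ← hmdef]
    exact congrArg x (Fin.ext (by simp [h0]))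
  · rw [if_neg h0]
    by_cases him : i.1 < m
    · rw [if_pos him]
      obtain ⟨-, hv', hxii⟩ := hval i.1 (by omega) him
      have : x ⟨i.1, hv'⟩ = x i := rfl
      omega
    · rw [if_neg him]
      push_neg at him
      have hci := (hconst (i.1 - t) (by omega)).1
      have e : x (⟨t + (i.1 - t), by omega⟩ : Fin n) = x i :=
        congrArg x (Fin.ext (by simp; omega))
      rw [e, hxt] at hci
      exact hci


theorem stmt7 (n : ℕ) (hn : 2 ≤ n) :
    {x : Fin n → ℕ | IsRAS n x ∧ Avoids221 n x}.ncard = n - 1 ∧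
    ∀ x : Fin n → ℕ, (IsRAS n x ∧ Avoids221 n x) ↔
      ∃ m, 1 ≤ m ∧ m ≤ n - 1 ∧
        x = fun i => if i.1 = 0 then m else if i.1 < m then i.1 else m := by
  have hiff : ∀ x : Fin n → ℕ, (IsRAS n x ∧ Avoids221 n x) ↔
      ∃ m, 1 ≤ m ∧ m ≤ n - 1 ∧ x = fSeq n m := by
    intro x
    constructor
    · rintro ⟨h1, h2⟩
      exact forward n hn x h1 h2
    · rintro ⟨m, hm1, hm2, rfl⟩
      exact back n m hn hm1 hm2
  refine ⟨?_, hiff⟩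
  have hset : {x : Fin n → ℕ | IsRAS n x ∧ Avoids221 n x} = fSeq n '' Set.Icc 1 (n - 1) := by
    ext x
    rw [Set.mem_setOf_eq, hiff x]
    simp only [Set.mem_image, Set.mem_Icc]
    constructor
    · rintro ⟨m, h1, h2, rfl⟩; exact ⟨m, ⟨h1, h2⟩, rfl⟩
    · rintro ⟨m, ⟨h1, h2⟩, rfl⟩; exact ⟨m, h1, h2, rfl⟩
  rw [hset]
  have hinj : Function.Injective (fSeq n) := by
    intro a b hab
    have := congrFun hab ⟨0, by omega⟩
    simpa [fSeq] using this
  rw [Set.ncard_image_of_injective _ hinj]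
  rw [← Finset.coe_Icc, Set.ncard_coe_finset, Nat.card_Icc]
  omega
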